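/- Let K be a field of characteristic 2 and G the dihedral group ⟨a, b | a^{2^n} = b² = 1, bab⁻¹ = a⁻¹⟩ of order 2^{n+1}, n ≥ 2. With u = a + b in KG, for every i ≥ 1 one has u^i ≡ (1+a)^{2i-1} + (1+a)^{2i-2}(1+b) + β₁(1+a)^{2i} + β₂(1+a)^{2i-1}(1+b) (mod I_K(G)^{2i+1}), where β₁ = β₂ = 1 if i is even and β₁ = β₂ = 0 if i is odd. -/

import Mathlib

/-- The Jacobson radical of a ring, as an ideal. -/
def ringRad (A : Type*) [Ring A] : Ideal A := (⊥ : Ideal A).jacobson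

/-- `B` is a filtered multiplicative `K`-basis of the `K`-algebra `A`:
it is a `K`-basis, products of basis elements are `0` or again basis elements,
and `B ∩ rad A` is a `K`-basis of the Jacobson radical `rad A`. -/
def IsFilteredMulBasis (K : Type*) {A : Type*} [Field K] [Ring A] [Algebra K A]
    (B : Set A) : Prop :=
  LinearIndependent K ((↑) : B → A) ∧ Submodule.span K B = ⊤ ∧
  (∀ b₁ ∈ B, ∀ b₂ ∈ B, b₁ * b₂ = 0 ∨ b₁ * b₂ ∈ B) ∧
  LinearIndependent K ((↑) : ↥(B ∩ (ringRad A : Set A)) → A) ∧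
  Submodule.span K (B ∩ (ringRad A : Set A)) = Submodule.restrictScalars K (ringRad A)

/-- The augmentation ideal of a group algebra. -/
noncomputable def augIdeal (K G : Type*) [Field K] [Group G] : Ideal (MonoidAlgebra K G) :=
  RingHom.ker (MonoidAlgebra.lift K K G 1).toRingHom

theorem stmt_14 {K : Type*} [Field K] [CharP K 2]
    {G : Type*} [Group G] (n : ℕ) (hn : 2 ≤ n) (a b : G)
    (ha : a ^ 2 ^ n = 1) (hb : b ^ 2 = 1) (hconj : b * a * b⁻¹ = a⁻¹)
    (hgen : Subgroup.closure {a, b} = (⊤ : Subgroup G))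
    (hcard : Nat.card G = 2 ^ (n + 1)) (i : ℕ) (hi : 1 ≤ i) :
    (MonoidAlgebra.of K G a + MonoidAlgebra.of K G b) ^ i -
      ((1 + MonoidAlgebra.of K G a) ^ (2 * i - 1) +
        (1 + MonoidAlgebra.of K G a) ^ (2 * i - 2) * (1 + MonoidAlgebra.of K G b) +
        (if Even i then
          (1 + MonoidAlgebra.of K G a) ^ (2 * i) +
          (1 + MonoidAlgebra.of K G a) ^ (2 * i - 1) * (1 + MonoidAlgebra.of K G b)
        else 0)) ∈ augIdeal K G ^ (2 * i + 1) := by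
  -- basic char 2 facts
  have hK2 : (2 : K) = 0 := CharTwo.two_eq_zero
  have h2A : (2 : MonoidAlgebra K G) = 0 := by
    rw [← map_ofNat (algebraMap K (MonoidAlgebra K G)) 2, hK2, map_zero]
  -- group facts
  have hbb : b * b = 1 := by rw [← pow_two, hb]
  have hba : b * a = a⁻¹ * b := by
    rw [← hconj]
    exact (inv_mul_cancel_right (b * a) b).symm
  -- group algebra products
  have hOfbb : MonoidAlgebra.of K G b * MonoidAlgebra.of K G b = 1 := by
    rw [← map_mul, hbb, map_one]
  have hOfba : MonoidAlgebra.of K G b * MonoidAlgebra.of K G a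
      = MonoidAlgebra.of K G a⁻¹ * MonoidAlgebra.of K G b := by
    rw [← map_mul, ← map_mul, hba]
  have hOfaw : MonoidAlgebra.of K G a * MonoidAlgebra.of K G a⁻¹ = 1 := by
    rw [← map_mul, mul_inv_cancel, map_one]
  have hOfwa : MonoidAlgebra.of K G a⁻¹ * MonoidAlgebra.of K G a = 1 := by
    rw [← map_mul, inv_mul_cancel, map_one]
  -- augmentation ideal memberships
  have hmem : ∀ v : MonoidAlgebra K G, (MonoidAlgebra.lift K K G 1) v = 0 →
      v ∈ augIdeal K G := by
    intro v hv
    exact RingHom.mem_ker.mpr hv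
  have hxI : (1 : MonoidAlgebra K G) + MonoidAlgebra.of K G a ∈ augIdeal K G := by
    apply hmem
    simp [MonoidAlgebra.lift_of, one_add_one_eq_two, hK2]
  have huI : MonoidAlgebra.of K G a + MonoidAlgebra.of K G b ∈ augIdeal K G := by
    apply hmem
    simp [MonoidAlgebra.lift_of, one_add_one_eq_two, hK2]
  set fa := MonoidAlgebra.of K G a with hfadef
  set fb := MonoidAlgebra.of K G b with hfbdef
  set fw := MonoidAlgebra.of K G a⁻¹ with hfwdef
  -- commutation facts
  have hxw1 : ((1 : MonoidAlgebra K G) + fa) * fw = 1 + fw := by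
    rw [add_mul, one_mul, hOfaw]; exact add_comm fw 1
  have hwx1 : fw * ((1 : MonoidAlgebra K G) + fa) = 1 + fw := by
    rw [mul_add, mul_one, hOfwa]; exact add_comm fw 1
  have hcomm : Commute ((1 : MonoidAlgebra K G) + fa) fw := by
    show _ * _ = _ * _
    rw [hxw1, hwx1]
  have hcw : Commute fw (((1 : MonoidAlgebra K G) + fa) * ((1 : MonoidAlgebra K G) + fa)) :=
    Commute.mul_right hcomm.symm hcomm.symm
  -- the central element z = a + a⁻¹, factored
  have hz : fa + fw = fw * (((1 : MonoidAlgebra K G) + fa) * ((1 : MonoidAlgebra K G) + fa)) := by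
    have e1 : fw * (((1 : MonoidAlgebra K G) + fa) * ((1 : MonoidAlgebra K G) + fa))
        = fw + fw * fa + fw * fa + fw * fa * fa := by noncomm_ring
    rw [hOfwa, one_mul] at e1
    rw [e1, show fw + (1 : MonoidAlgebra K G) + 1 + fa
        = fa + fw + (1 + 1) from by abel, one_add_one_eq_two, h2A, add_zero]
  -- u^2 = z * u
  have hu2 : (fa + fb) * (fa + fb) = (fa + fw) * (fa + fb) := by
    have e1 : (fa + fb) * (fa + fb) = fa * fa + fa * fb + fb * fa + fb * fb := by noncomm_ring
    have e2 : (fa + fw) * (fa + fb) = fa * fa + fa * fb + fw * fa + fw * fb := by noncomm_ring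
    rw [e1, e2, hOfbb, hOfba, hOfwa]
    abel
  -- u^(m+1) = z^m * u
  have hpow : ∀ m : ℕ, (fa + fb) ^ (m + 1) = (fa + fw) ^ m * (fa + fb) := by
    intro m
    induction m with
    | zero => simp
    | succ m ih => rw [pow_succ, ih, mul_assoc, hu2, ← mul_assoc, ← pow_succ]
  -- z^m = (1+a)^(2m) * w^m
  have hzpow : ∀ m : ℕ, (fa + fw) ^ m = ((1 : MonoidAlgebra K G) + fa) ^ (2 * m) * fw ^ m := by
    intro m
    rw [hz, hcw.mul_pow, ← pow_two, ← pow_mul]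
    exact (hcomm.pow_pow (2 * m) m).eq.symm
  have hI2 : (augIdeal K G) ^ 2 = augIdeal K G * augIdeal K G := by
    rw [show (2 : ℕ) = 1 + 1 from rfl, Submodule.pow_succ, Submodule.pow_one]
  have hxx2 : ((1 : MonoidAlgebra K G) + fa) * ((1 : MonoidAlgebra K G) + fa)
      ∈ augIdeal K G ^ 2 := by
    rw [hI2]
    exact Ideal.mul_mem_mul hxI hxI
  -- w^m ≡ 1 + (m mod 2)(1+a)  (mod I²)
  have hc : ∀ m : ℕ, fw ^ m + 1 + (if Even m then 0 else 1 + fa) ∈ augIdeal K G ^ 2 := by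
    intro m
    induction m with
    | zero =>
      rw [if_pos Even.zero, pow_zero, add_zero, one_add_one_eq_two, h2A]
      exact zero_mem _
    | succ m ih =>
      by_cases hm : Even m
      · rw [if_pos hm, add_zero] at ih
        rw [if_neg (by simp [Nat.even_add_one, hm]), pow_succ']
        have st : fw * fw ^ m + 1 + ((1 : MonoidAlgebra K G) + fa)
            = fw * (fw ^ m + 1) + (fa + fw) + 2 * (1 - fw) := by noncomm_ring
        rw [st, h2A, zero_mul, add_zero, hz]
        exact add_mem (Ideal.mul_mem_left _ fw ih) (Ideal.mul_mem_left _ fw hxx2)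
      · rw [if_neg hm] at ih
        rw [if_pos (Nat.even_add_one.mpr hm), add_zero, pow_succ']
        have st : fw * fw ^ m + 1
            = fw * (fw ^ m + 1 + (1 + fa)) + ((1 : MonoidAlgebra K G) + fw - fw * (1 + fa))
              + 2 * (-fw) := by noncomm_ring
        rw [st, hwx1, sub_self, add_zero, h2A, zero_mul, add_zero]
        exact Ideal.mul_mem_left _ fw ih
  -- set i = j + 1 and normalize exponents
  obtain ⟨j, rfl⟩ : ∃ j, i = j + 1 := ⟨i - 1, by omega⟩
  rw [show 2 * (j + 1) - 1 = 2 * j + 1 from by omega,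
      show 2 * (j + 1) - 2 = 2 * j from by omega,
      show 2 * (j + 1) + 1 = 2 * j + 3 from by omega,
      show 2 * (j + 1) = 2 * j + 2 from by omega]
  have hP : (augIdeal K G) ^ (2 * j) * (augIdeal K G) ^ 2 * (augIdeal K G)
      = (augIdeal K G) ^ (2 * j + 3) := by
    rw [hI2, show 2 * j + 3 = 2 * j + 1 + 1 + 1 from by omega,
      Submodule.pow_succ (M := augIdeal K G) (n := 2 * j + 1 + 1),
      Submodule.pow_succ (M := augIdeal K G) (n := 2 * j + 1),
      Submodule.pow_succ (M := augIdeal K G) (n := 2 * j),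
      ← mul_assoc (augIdeal K G ^ (2 * j)) (augIdeal K G) (augIdeal K G)]
  by_cases hev : Even j
  · rw [if_neg (by simp [Nat.even_add_one, hev])]
    have he := hc j
    rw [if_pos hev, add_zero] at he
    have key : (fa + fb) ^ (j + 1)
        = (((1 : MonoidAlgebra K G) + fa) ^ (2 * j + 1)
            + ((1 : MonoidAlgebra K G) + fa) ^ (2 * j) * (1 + fb) + 0)
          + ((1 : MonoidAlgebra K G) + fa) ^ (2 * j) * (fw ^ j + 1) * (fa + fb)
          + 2 * (-(((1 : MonoidAlgebra K G) + fa) ^ (2 * j) * (1 + fa + fb))) := by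
      have p1 : ((1 : MonoidAlgebra K G) + fa) ^ (2 * j + 1)
          = ((1 : MonoidAlgebra K G) + fa) ^ (2 * j) * ((1 : MonoidAlgebra K G) + fa) :=
        pow_succ _ _
      rw [hpow j, hzpow j, p1]
      noncomm_ring
    rw [key, h2A, zero_mul, add_zero, add_sub_cancel_left, ← hP]
    exact Ideal.mul_mem_mul (Ideal.mul_mem_mul (Ideal.pow_mem_pow hxI (2 * j)) he) huI
  · rw [if_pos (Nat.even_add_one.mpr hev)]
    have he := hc j
    rw [if_neg hev] at he
    have key : (fa + fb) ^ (j + 1)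
        = (((1 : MonoidAlgebra K G) + fa) ^ (2 * j + 1)
            + ((1 : MonoidAlgebra K G) + fa) ^ (2 * j) * (1 + fb)
            + (((1 : MonoidAlgebra K G) + fa) ^ (2 * j + 2)
              + ((1 : MonoidAlgebra K G) + fa) ^ (2 * j + 1) * (1 + fb)))
          + ((1 : MonoidAlgebra K G) + fa) ^ (2 * j) * (fw ^ j + 1 + (1 + fa)) * (fa + fb)
          + 2 * (-(((1 : MonoidAlgebra K G) + fa) ^ (2 * j)
              * (2 + 3 * fa + 2 * fb + fa * fa + fa * fb))) := by
      have p1 : ((1 : MonoidAlgebra K G) + fa) ^ (2 * j + 1)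
          = ((1 : MonoidAlgebra K G) + fa) ^ (2 * j) * ((1 : MonoidAlgebra K G) + fa) :=
        pow_succ _ _
      have p2 : ((1 : MonoidAlgebra K G) + fa) ^ (2 * j + 2)
          = ((1 : MonoidAlgebra K G) + fa) ^ (2 * j) * ((1 : MonoidAlgebra K G) + fa)
            * ((1 : MonoidAlgebra K G) + fa) := by
        rw [show 2 * j + 2 = (2 * j + 1) + 1 from by omega, pow_succ, p1]
      rw [hpow j, hzpow j, p1, p2]
      noncomm_ring
    rw [key, h2A, zero_mul, add_zero, add_sub_cancel_left, ← hP]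
    exact Ideal.mul_mem_mul (Ideal.mul_mem_mul (Ideal.pow_mem_pow hxI (2 * j)) he) huI
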